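/- (Determinant-based adequacy bound.) Let H be a real Hilbert space, (v_i)_{i ≥ 1} an orthonormal family whose closed linear span contains u*, with c_i = ⟨u*, v_i⟩, and let (λ_i)_{i ≥ 1} be positive nonincreasing reals satisfying the source condition Σ_{i ≥ 1} c_i² / λ_i^{2s} ≤ R_s² for some s > 0 and R_s ≥ 0. Let U_h = span{v_1, …, v_r}. Then inf_{u ∈ U_h} ‖u* − u‖ ≤ R_s · λ_r^{s}; moreover, since λ_r ≤ (∏_{i=1}^r λ_i)^{1/r}, it follows that inf_{u ∈ U_h} ‖u* − u‖ ≤ R_s · (∏_{i=1}^r λ_i)^{s/r} = R_s · det(K)^{s/r}, where det(K) = ∏_{i=1}^r λ_i is the determinant of the NTK Gram matrix. -/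

import Mathlib

open scoped RealInnerProductSpace

/-- Determinant-based adequacy bound.  Under the source condition, the distance
from `u*` to `U_h = span{v_0, …, v_{r-1}}` is at most `R_s · λ_{r-1}^s`
(`λ_{r-1}` being the smallest of the first `r` eigenvalues); moreover, since
the smallest eigenvalue is at most the geometric mean `(∏_{i<r} λ_i)^{1/r}`,
the distance is at most `R_s · (det K)^{s/r}` where `det K = ∏_{i<r} λ_i`. -/
theorem determinant_based_adequacy_bound
    {H : Type*} [NormedAddCommGroup H] [InnerProductSpace ℝ H] [CompleteSpace H]
    [DecidableEq H]
    (v : ℕ → H) (hv : Orthonormal ℝ v)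
    (ustar : H)
    (hmem : ustar ∈ closure ((Submodule.span ℝ (Set.range v) : Submodule ℝ H) : Set H))
    (lam : ℕ → ℝ) (hlam_pos : ∀ i, 0 < lam i) (hlam_mono : Antitone lam)
    (s Rs : ℝ) (hs : 0 < s) (hRs : 0 ≤ Rs)
    (hsummable : Summable fun i : ℕ => ⟪ustar, v i⟫ ^ 2 / lam i ^ (2 * s))
    (hsource : (∑' i : ℕ, ⟪ustar, v i⟫ ^ 2 / lam i ^ (2 * s)) ≤ Rs ^ 2)
    (r : ℕ) (hr : 1 ≤ r) :
    (⨅ u : Submodule.span ℝ (((Finset.range r).image v : Finset H) : Set H),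
        ‖ustar - (u : H)‖) ≤ Rs * lam (r - 1) ^ s
    ∧ (⨅ u : Submodule.span ℝ (((Finset.range r).image v : Finset H) : Set H),
        ‖ustar - (u : H)‖) ≤ Rs * (∏ i ∈ Finset.range r, lam i) ^ (s / r) := by
  classical
  set c : ℕ → ℝ := fun i => ⟪ustar, v i⟫ with hc
  set K := (Submodule.span ℝ (Set.range v)).topologicalClosure with hK
  have hvK : ∀ i, v i ∈ K := fun i =>
    Submodule.le_topologicalClosure _ (Submodule.subset_span ⟨i, rfl⟩)
  have hustar : ustar ∈ K := by
    have : (K : Set H) = closure ((Submodule.span ℝ (Set.range v) : Submodule ℝ H) : Set H) :=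
      Submodule.topologicalClosure_coe _
    rw [← SetLike.mem_coe, this]; exact hmem
  set w : ℕ → K := fun i => ⟨v i, hvK i⟩ with hwdef
  have hw : Orthonormal ℝ w := by
    rw [orthonormal_iff_ite]
    intro i j
    have := orthonormal_iff_ite.mp hv i j
    simpa [hwdef, Submodule.coe_inner] using this
  have hsp : ⊤ ≤ (Submodule.span ℝ (Set.range w)).topologicalClosure := by
    intro x _
    have himg : Submodule.map K.subtype (Submodule.span ℝ (Set.range w))
        = Submodule.span ℝ (Set.range v) := by
      rw [Submodule.map_span]
      congr 1
      ext y
      constructor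
      · rintro ⟨z, ⟨i, rfl⟩, rfl⟩; exact ⟨i, rfl⟩
      · rintro ⟨i, rfl⟩; exact ⟨w i, ⟨i, rfl⟩, rfl⟩
    have hxcl : (x : H) ∈ closure (Subtype.val ''
        ((Submodule.span ℝ (Set.range w) : Submodule ℝ K) : Set K)) := by
      have : (Subtype.val '' ((Submodule.span ℝ (Set.range w) : Submodule ℝ K) : Set K))
          = ((Submodule.span ℝ (Set.range v) : Submodule ℝ H) : Set H) := by
        rw [← himg]; rfl
      rw [this]
      exact x.2
    have : x ∈ closure ((Submodule.span ℝ (Set.range w) : Submodule ℝ K) : Set K) :=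
      closure_subtype.mpr hxcl
    rwa [← SetLike.mem_coe, Submodule.topologicalClosure_coe]
  haveI : CompleteSpace K :=
    (Submodule.span ℝ (Set.range v)).isClosed_topologicalClosure.completeSpace_coe
  let b : HilbertBasis ℕ ℝ K := HilbertBasis.mk hw hsp
  have hb : ∀ i, (b i : H) = v i := fun i => by
    have : b i = w i := congrFun (HilbertBasis.coe_mk hw hsp) i
    rw [this]
  have hsum0 : HasSum (fun i => (⟪(b i : H), ustar⟫ : ℝ) • b i)
      (K.orthogonalProjectionOnto ustar) := b.hasSum_orthogonalProjection ustar
  have hproj : ((K.orthogonalProjectionOnto ustar : K) : H) = ustar :=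
    K.starProjection_eq_self_iff.mpr hustar
  have hsum : HasSum (fun i => c i • v i) ustar := by
    have h2 := hsum0.mapL K.subtypeL
    have h3 : (fun i => K.subtypeL ((⟪(b i : H), ustar⟫ : ℝ) • b i)) = fun i => c i • v i := by
      funext i
      rw [map_smul, Submodule.subtypeL_apply, hb i, real_inner_comm]
    rw [h3] at h2
    rwa [show K.subtypeL (K.orthogonalProjectionOnto ustar) = ustar from hproj] at h2
  set y : H := ∑ i ∈ Finset.range r, c i • v i with hy_def
  have hy : y ∈ Submodule.span ℝ (((Finset.range r).image v : Finset H) : Set H) :=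
    Submodule.sum_smul_mem _ _ (fun i hi => Submodule.subset_span
      (by simp only [Finset.coe_image, Set.mem_image, Finset.mem_coe]; exact ⟨i, hi, rfl⟩))
  set d : ℕ → ℝ := fun i => if i ∈ Finset.range r then 0 else c i with hd_def
  have hsumd : HasSum (fun i => d i • v i) (ustar - y) := by
    have hfin : HasSum (fun i => if i ∈ Finset.range r then c i • v i else 0) y := by
      have h0 := hasSum_sum_of_ne_finset_zero (s := Finset.range r) (L := SummationFilter.unconditional ℕ)
        (f := fun i => if i ∈ Finset.range r then c i • v i else 0)
        (fun i hi => if_neg hi)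
      have heq2 : ∑ i ∈ Finset.range r, (if i ∈ Finset.range r then c i • v i else 0) = y :=
        Finset.sum_congr rfl fun i hi => if_pos hi
      rwa [heq2] at h0
    have hsub := hsum.sub hfin
    convert hsub using 1
    funext i
    by_cases hi : i ∈ Finset.range r
    · simp only [hd_def, if_pos hi]
      simp
    · simp only [hd_def, if_neg hi]
      simp
  -- key per-finset bound
  have hlpos := hlam_pos (r - 1)
  have key : ∀ F : Finset ℕ, ∑ i ∈ F, d i ^ 2 ≤ (Rs * lam (r - 1) ^ s) ^ 2 := by
    intro F
    have hterm : ∀ i, d i ^ 2 ≤ lam (r - 1) ^ (2 * s) * (c i ^ 2 / lam i ^ (2 * s)) := by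
      intro i
      by_cases hi : i ∈ Finset.range r
      · have hdi : d i = 0 := if_pos hi
        rw [hdi, zero_pow two_ne_zero]
        exact mul_nonneg (Real.rpow_pos_of_pos hlpos _).le
          (div_nonneg (sq_nonneg _) (Real.rpow_pos_of_pos (hlam_pos i) _).le)
      · have hir : r ≤ i := by simpa using hi
        have : d i = c i := if_neg hi
        rw [this]
        have hlle : lam i ^ (2 * s) ≤ lam (r - 1) ^ (2 * s) :=
          Real.rpow_le_rpow (hlam_pos i).le (hlam_mono (by omega)) (by linarith)
        have hpos : (0 : ℝ) < lam i ^ (2 * s) := Real.rpow_pos_of_pos (hlam_pos i) _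
        calc c i ^ 2 = lam i ^ (2 * s) * (c i ^ 2 / lam i ^ (2 * s)) := by
              field_simp
          _ ≤ lam (r - 1) ^ (2 * s) * (c i ^ 2 / lam i ^ (2 * s)) := by
              exact mul_le_mul_of_nonneg_right hlle
                (div_nonneg (sq_nonneg _) (Real.rpow_pos_of_pos (hlam_pos i) _).le)
    calc ∑ i ∈ F, d i ^ 2
        ≤ ∑ i ∈ F, lam (r - 1) ^ (2 * s) * (c i ^ 2 / lam i ^ (2 * s)) :=
          Finset.sum_le_sum fun i _ => hterm i
      _ = lam (r - 1) ^ (2 * s) * ∑ i ∈ F, c i ^ 2 / lam i ^ (2 * s) := by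
          rw [Finset.mul_sum]
      _ ≤ lam (r - 1) ^ (2 * s) * Rs ^ 2 := by
          apply mul_le_mul_of_nonneg_left _ (Real.rpow_pos_of_pos hlpos _).le
          exact le_trans (hsummable.sum_le_tsum F (fun i _ =>
            div_nonneg (sq_nonneg _) (Real.rpow_pos_of_pos (hlam_pos i) _).le)) hsource
      _ = (Rs * lam (r - 1) ^ s) ^ 2 := by
          have hexp : lam (r - 1) ^ (2 * s) = (lam (r - 1) ^ s) ^ 2 := by
            rw [← Real.rpow_natCast (lam (r - 1) ^ s) 2, ← Real.rpow_mul hlpos.le]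
            congr 1
            push_cast
            ring
          rw [hexp, mul_pow]
          ring
  have hnorm : ‖ustar - y‖ ≤ Rs * lam (r - 1) ^ s := by
    have heq : ∀ F : Finset ℕ, ‖∑ i ∈ F, d i • v i‖ ^ 2 = ∑ i ∈ F, d i ^ 2 := by
      intro F
      rw [← real_inner_self_eq_norm_sq, hv.inner_sum d d F]
      simp [sq]
    have ht : Filter.Tendsto (fun F : Finset ℕ => ∑ i ∈ F, d i ^ 2)
        Filter.atTop (nhds (‖ustar - y‖ ^ 2)) := by
      have := ((continuous_norm.pow 2).tendsto (ustar - y)).comp hsumd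
      simp only [Function.comp_def] at this
      simpa only [heq, Pi.pow_apply, SummationFilter.unconditional_filter] using this
    have hsq : ‖ustar - y‖ ^ 2 ≤ (Rs * lam (r - 1) ^ s) ^ 2 :=
      le_of_tendsto ht (Filter.Eventually.of_forall key)
    have hb0 : (0 : ℝ) ≤ Rs * lam (r - 1) ^ s := mul_nonneg hRs (Real.rpow_pos_of_pos hlpos _).le
    nlinarith [norm_nonneg (ustar - y)]
  have hbdd : BddBelow (Set.range fun u : Submodule.span ℝ
      (((Finset.range r).image v : Finset H) : Set H) => ‖ustar - (u : H)‖) :=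
    ⟨0, by rintro x ⟨u, rfl⟩; exact norm_nonneg _⟩
  have part1 : (⨅ u : Submodule.span ℝ (((Finset.range r).image v : Finset H) : Set H),
      ‖ustar - (u : H)‖) ≤ Rs * lam (r - 1) ^ s :=
    le_trans (ciInf_le hbdd ⟨y, hy⟩) hnorm
  refine ⟨part1, le_trans part1 ?_⟩
  have hprodpos : (0 : ℝ) < ∏ i ∈ Finset.range r, lam i :=
    Finset.prod_pos fun i _ => hlam_pos i
  have h1 : lam (r - 1) ^ (r : ℕ) ≤ ∏ i ∈ Finset.range r, lam i := by
    calc lam (r - 1) ^ (r : ℕ) = ∏ _i ∈ Finset.range r, lam (r - 1) := by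
          rw [Finset.prod_const, Finset.card_range]
      _ ≤ ∏ i ∈ Finset.range r, lam i :=
          Finset.prod_le_prod (fun i _ => hlpos.le)
            (fun i hi => hlam_mono (by simp at hi; omega))
  have hrne : (r : ℝ) ≠ 0 := Nat.cast_ne_zero.mpr (by omega)
  have h2 : lam (r - 1) ^ s ≤ (∏ i ∈ Finset.range r, lam i) ^ (s / r) := by
    have h3 := Real.rpow_le_rpow (pow_nonneg hlpos.le _) h1 (div_nonneg hs.le (Nat.cast_nonneg r))
    rwa [← Real.rpow_natCast (lam (r - 1)) r, ← Real.rpow_mul hlpos.le,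
      show (r : ℝ) * (s / r) = s by field_simp] at h3
  exact mul_le_mul_of_nonneg_left h2 hRs
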